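/- Let (𝔄_i)_{i∈I} be a family of *-subalgebras of 𝔄, each containing 𝔅, which is c-free with respect to (Φ, Ψ), and let I = ⊔_{j∈J} I_j be a partition of the index set I. For each j ∈ J let 𝔄^{(j)} be the *-subalgebra of 𝔄 generated by ⋃_{i∈I_j} 𝔄_i. Then the family (𝔄^{(j)})_{j∈J} is c-free with respect to (Φ, Ψ). -/

import Mathlib

/-!
STATEMENT 2: Let `(𝔄ᵢ)_{i∈I}` be a family of *-subalgebras of `𝔄`, each containing `𝔅`,
which is c-free with respect to `(Φ, Ψ)` (`Φ : 𝔄 → 𝔅`, `Ψ : 𝔄 → 𝔇` conditional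
expectations, `𝔇` a C*-subalgebra of the unital C*-algebra `𝔅`, `𝔅 ⊆ 𝔄` a unital
*-subalgebra).  If `I = ⊔_{j∈J} I_j` is a partition of `I` (encoded by the fibers of a
map `f : I → J`), and `𝔄^{(j)}` is the *-subalgebra generated by `⋃_{i ∈ f⁻¹(j)} 𝔄ᵢ`,
then the family `(𝔄^{(j)})_{j∈J}` is c-free with respect to `(Φ, Ψ)`.
-/

/-- The family `S` of *-subalgebras of `A` is conditionally free (c-free) with respect to
`(Φ, Ψ)`: for every `n ≥ 1`, every tuple `a₁, …, aₙ` with `aⱼ ∈ S (ε j)`,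
`ε(1) ≠ ε(2) ≠ … ≠ ε(n)` (adjacent indices distinct) and `Ψ(aⱼ) = 0`, one has
`Ψ(a₁⋯aₙ) = 0` and `Φ(a₁⋯aₙ) = Φ(a₁)⋯Φ(aₙ)`. -/
def IsCFreeFamily {B A I : Type*} [Ring B] [Algebra ℂ B] [Ring A] [Algebra ℂ A]
    [StarRing A] [StarModule ℂ A]
    (Φ Ψ : A →ₗ[ℂ] B) (S : I → StarSubalgebra ℂ A) : Prop :=
  ∀ (m : ℕ) (ε : Fin (m + 1) → I), (∀ i : Fin m, ε i.castSucc ≠ ε i.succ) →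
    ∀ a : Fin (m + 1) → A, (∀ j, a j ∈ S (ε j)) → (∀ j, Ψ (a j) = 0) →
      Ψ (List.ofFn a).prod = 0 ∧
      Φ (List.ofFn a).prod = (List.ofFn fun j => Φ (a j)).prod

namespace CFreeAux

lemma ofFn_get_map {α β : Type*} (l : List α) (g : α → β) {m : ℕ} (hm : l.length = m + 1) :
    (List.ofFn fun k : Fin (m+1) => g (l.get (Fin.cast hm.symm k))) = l.map g := by
  apply List.ext_getElem
  · simp [hm]
  · intro i h1 h2
    rw [List.getElem_ofFn, List.getElem_map]
    rfl

lemma ofFn_update {α : Type*} {n : ℕ} (a : Fin n → α) (k : Fin n) (x : α) :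
    List.ofFn (Function.update a k x) = (List.ofFn a).set k x := by
  apply List.ext_getElem
  · simp
  · intro i h1 h2
    simp only [List.length_ofFn] at h1
    rw [List.getElem_set, List.getElem_ofFn, List.getElem_ofFn, Function.update_apply]
    by_cases h : (k : ℕ) = i
    · rw [if_pos h, if_pos (Fin.ext h.symm)]
    · rw [if_neg h, if_neg (fun hh => h (by rw [← hh]))]

lemma prod_update {M : Type*} [Monoid M] {n : ℕ} (a : Fin n → M) (k : Fin n) (x : M) :
    (List.ofFn (Function.update a k x)).prod =
      ((List.ofFn a).take k).prod * x * ((List.ofFn a).drop (k + 1)).prod := by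
  rw [ofFn_update, List.prod_set]
  simp [k.isLt]

lemma prod_map_update {α : Type*} {M : Type*} [Monoid M] {n : ℕ} (a : Fin n → α)
    (k : Fin n) (x : α) (g : α → M) :
    (List.ofFn fun j => g (Function.update a k x j)).prod =
      ((List.ofFn fun j => g (a j)).take k).prod * g x *
        ((List.ofFn fun j => g (a j)).drop (k + 1)).prod := by
  have h : (fun j => g (Function.update a k x j)) =
      Function.update (fun j => g (a j)) k (g x) := by
    funext j
    rw [Function.update_apply, Function.update_apply, apply_ite g]
  rw [h, prod_update]

variable {B A I : Type*} [Ring B] [Algebra ℂ B] [Ring A] [Algebra ℂ A]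
  [StarRing A] [StarModule ℂ A]

lemma listfree {Φ Ψ : A →ₗ[ℂ] B} {S : I → StarSubalgebra ℂ A}
    (hfree : IsCFreeFamily Φ Ψ S) (l : List (I × A)) (hne : l ≠ [])
    (hchain : l.IsChain (fun p q => p.1 ≠ q.1))
    (hmem : ∀ p ∈ l, p.2 ∈ S p.1) (hcent : ∀ p ∈ l, Ψ p.2 = 0) :
    Ψ (l.map Prod.snd).prod = 0 ∧
      Φ (l.map Prod.snd).prod = (l.map fun p => Φ p.2).prod := by
  obtain ⟨m, hm⟩ : ∃ m, l.length = m + 1 := by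
    have := List.length_pos_iff.mpr hne; exact ⟨l.length - 1, by omega⟩
  have h1 := ofFn_get_map l Prod.snd hm
  have h2 := ofFn_get_map l (fun p => Φ p.2) hm
  have hadj : ∀ i : Fin m,
      (l.get (Fin.cast hm.symm i.castSucc)).1 ≠ (l.get (Fin.cast hm.symm i.succ)).1 := by
    intro i
    have h := List.isChain_iff_getElem.mp hchain i (by omega)
    exact h
  obtain ⟨hΨ0, hΦ⟩ := hfree m (fun k => (l.get (Fin.cast hm.symm k)).1) hadj
      (fun k => (l.get (Fin.cast hm.symm k)).2)
      (fun k => hmem _ (l.get_mem _)) (fun k => hcent _ (l.get_mem _))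
  rw [h1] at hΨ0 hΦ
  rw [h2] at hΦ
  exact ⟨hΨ0, hΦ⟩


section Words

variable {J : Type*} [StarRing B] [StarModule ℂ B] (Ψ : A →ₗ[ℂ] B) (S : I → StarSubalgebra ℂ A) (f : I → J)
  (ι : B →⋆ₐ[ℂ] A) (D : StarSubalgebra ℂ B)

/-- The set of products of alternating `Ψ`-centered words with letters from the `S i`,
`i ∈ f ⁻¹' {j}`. -/
def Wset (j : J) : Set A :=
  { x | ∃ l : List (I × A), l ≠ [] ∧ l.IsChain (fun p q => p.1 ≠ q.1) ∧
      (∀ p ∈ l, f p.1 = j ∧ p.2 ∈ S p.1 ∧ Ψ p.2 = 0) ∧ x = (l.map Prod.snd).prod }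

/-- span of `ι '' D` together with the centered alternating words. -/
def Msub (j : J) : Submodule ℂ A :=
  Submodule.span ℂ ((⇑ι '' (D : Set B)) ∪ Wset Ψ S f j)

variable {Ψ S f ι D}
variable (hΨD : ∀ a : A, Ψ a ∈ D)
  (hΨbimod : ∀ d d' : B, d ∈ D → d' ∈ D → ∀ a : A, Ψ (ι d * a * ι d') = d * Ψ a * d')
  (hΨid : ∀ d : B, d ∈ D → Ψ (ι d) = d)
  (hS : ∀ (i : I) (b : B), ι b ∈ S i)

include hΨbimod in
lemma psi_mul_iota {d : B} (hd : d ∈ D) (a : A) : Ψ (a * ι d) = Ψ a * d := by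
  have := hΨbimod 1 d D.one_mem hd a
  simpa using this

include hΨbimod in
lemma iota_mul_psi {d : B} (hd : d ∈ D) (a : A) : Ψ (ι d * a) = d * Ψ a := by
  have := hΨbimod d 1 hd D.one_mem a
  simpa using this

include hΨbimod hS in
lemma word_mul_iota {j : J} {x : A} (hx : x ∈ Wset Ψ S f j) {d : B} (hd : d ∈ D) :
    x * ι d ∈ Wset Ψ S f j := by
  obtain ⟨l, hne, hch, hp, rfl⟩ := hx
  have hl : l.dropLast ++ [l.getLast hne] = l := List.dropLast_append_getLast hne
  set q := l.getLast hne with hq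
  refine ⟨l.dropLast ++ [(q.1, q.2 * ι d)], by simp, ?_, ?_, ?_⟩
  · have : (l.dropLast ++ [(q.1, q.2 * ι d)]).map Prod.fst = l.map Prod.fst := by
      conv_rhs => rw [← hl]
      simp
    have h2 := (List.isChain_map Prod.fst).mpr hch
    rw [← this] at h2
    exact (List.isChain_map Prod.fst).mp h2
  · intro p hp'
    rcases List.mem_append.mp hp' with h | h
    · exact hp p ((List.dropLast_sublist l).subset h)
    · have hq' := hp q (by rw [← hl]; simp)
      simp only [List.mem_singleton] at h
      subst h
      refine ⟨hq'.1, mul_mem hq'.2.1 (hS _ _), ?_⟩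
      rw [psi_mul_iota hΨbimod hd, hq'.2.2, zero_mul]
  · conv_lhs => rw [← hl]
    simp [mul_assoc]

include hΨD hΨbimod hΨid hS in
lemma word_mul_letter {j : J} {x : A} (hx : x ∈ Wset Ψ S f j) {i : I} {c : A}
    (hfi : f i = j) (hc : c ∈ S i) (hcC : Ψ c = 0) : x * c ∈ Msub Ψ S f ι D j := by
  obtain ⟨l, hne, hch, hp, rfl⟩ := hx
  have hl : l.dropLast ++ [l.getLast hne] = l := List.dropLast_append_getLast hne
  set q := l.getLast hne with hq
  have hqmem : q ∈ l := by rw [← hl]; simp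
  have hqp := hp q hqmem
  have hxP : (l.map Prod.snd).prod = (l.dropLast.map Prod.snd).prod * q.2 := by
    conv_lhs => rw [← hl]
    rw [List.map_append, List.prod_append]
    simp
  by_cases hqi : q.1 = i
  · -- merge the last letter with c
    set e := q.2 * c with he
    set d := Ψ e with hd
    have hdD : d ∈ D := hΨD e
    have heS : e ∈ S i := mul_mem (hqi ▸ hqp.2.1) hc
    have hec : Ψ (e - ι d) = 0 := by
      rw [map_sub, hΨid d hdD]; exact sub_self d
    have heS' : e - ι d ∈ S i := sub_mem heS (hS i d)
    have hsplit : (l.map Prod.snd).prod * c =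
        (l.dropLast.map Prod.snd).prod * (e - ι d) +
          (l.dropLast.map Prod.snd).prod * ι d := by
      rw [hxP, mul_assoc, ← he, mul_sub, sub_add_cancel]
    rw [hsplit]
    rcases eq_or_ne l.dropLast [] with hnil | hnil
    · refine Submodule.add_mem _ ?_ ?_
      · exact Submodule.subset_span (Or.inr ⟨[(i, e - ι d)], by simp, by simp,
          by rintro p hp'; simp at hp'; subst hp'; exact ⟨hfi, heS', hec⟩,
          by simp [hnil]⟩)
      · refine Submodule.subset_span (Or.inl ⟨d, hdD, ?_⟩)
        simp [hnil]
    · -- l.dropLast is a nonempty word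
      have hch' : l.dropLast.IsChain (fun p q => p.1 ≠ q.1) :=
        hch.prefix (List.dropLast_prefix l)
    -- link: last of dropLast ≠ q.1
      have hlink : (l.dropLast.getLast hnil).1 ≠ q.1 := by
        rw [← hl] at hch
        obtain ⟨-, -, hlink⟩ := List.isChain_append.mp hch
        exact hlink _ (by rw [List.getLast?_eq_some_getLast hnil]; rfl) q rfl
      have hpsub : ∀ p ∈ l.dropLast, f p.1 = j ∧ p.2 ∈ S p.1 ∧ Ψ p.2 = 0 :=
        fun p h => hp p ((List.dropLast_sublist l).subset h)
      refine Submodule.add_mem _ ?_ ?_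
      · refine Submodule.subset_span (Or.inr ⟨l.dropLast ++ [(i, e - ι d)], by simp, ?_, ?_, by simp⟩)
        · refine List.IsChain.append hch' (List.isChain_singleton _) ?_
          intro p hp' y hy
          simp only [List.head?_cons, Option.mem_some_iff] at hy
          rw [List.getLast?_eq_some_getLast hnil, Option.mem_some_iff] at hp'
          subst hp'; subst hy
          simpa [hqi] using hlink
        · intro p hp'
          rcases List.mem_append.mp hp' with h | h
          · exact hpsub p h
          · simp only [List.mem_singleton] at h; subst h
            exact ⟨hfi, heS', hec⟩
      · have : l.dropLast ∈ { l' : List (I × A) | True } := trivial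
        refine Submodule.subset_span (Or.inr ?_)
        exact word_mul_iota hΨbimod hS ⟨l.dropLast, hnil, hch', hpsub, rfl⟩ hdD
  · -- simply append the letter
    refine Submodule.subset_span (Or.inr ⟨l ++ [(i, c)], by simp, ?_, ?_, by simp⟩)
    · refine List.IsChain.append hch (List.isChain_singleton _) ?_
      intro p hp' y hy
      simp only [List.head?_cons, Option.mem_some_iff] at hy
      rw [List.getLast?_eq_some_getLast hne, Option.mem_some_iff] at hp'
      subst hp'; subst hy
      exact hqi
    · intro p hp'
      rcases List.mem_append.mp hp' with h | h
      · exact hp p h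
      · simp only [List.mem_singleton] at h; subst h
        exact ⟨hfi, hc, hcC⟩


include hΨD hΨbimod hΨid hS in
lemma msub_mul_letter {j : J} {i : I} {c : A} (hfi : f i = j) (hc : c ∈ S i) (hcC : Ψ c = 0)
    {x : A} (hx : x ∈ Msub Ψ S f ι D j) : x * c ∈ Msub Ψ S f ι D j := by
  induction hx using Submodule.span_induction with
  | mem y hy =>
    rcases hy with ⟨d, hd, rfl⟩ | hy
    · refine Submodule.subset_span (Or.inr ⟨[(i, ι d * c)], by simp, by simp, ?_, by simp⟩)
      rintro p hp; simp only [List.mem_singleton] at hp; subst hp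
      refine ⟨hfi, mul_mem (hS i d) hc, ?_⟩
      rw [iota_mul_psi hΨbimod hd, hcC, mul_zero]
    · exact word_mul_letter hΨD hΨbimod hΨid hS hy hfi hc hcC
  | zero => rw [zero_mul]; exact Submodule.zero_mem _
  | add y z _ _ hy hz => rw [add_mul]; exact Submodule.add_mem _ hy hz
  | smul r y _ hy => rw [smul_mul_assoc]; exact Submodule.smul_mem _ _ hy

include hΨbimod hS in
lemma msub_mul_iota {j : J} {d : B} (hd : d ∈ D) {x : A} (hx : x ∈ Msub Ψ S f ι D j) :
    x * ι d ∈ Msub Ψ S f ι D j := by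
  induction hx using Submodule.span_induction with
  | mem y hy =>
    rcases hy with ⟨d', hd', rfl⟩ | hy
    · exact Submodule.subset_span (Or.inl ⟨d' * d, mul_mem hd' hd, map_mul ι d' d⟩)
    · exact Submodule.subset_span (Or.inr (word_mul_iota hΨbimod hS hy hd))
  | zero => rw [zero_mul]; exact Submodule.zero_mem _
  | add y z _ _ hy hz => rw [add_mul]; exact Submodule.add_mem _ hy hz
  | smul r y _ hy => rw [smul_mul_assoc]; exact Submodule.smul_mem _ _ hy

include hΨD hΨbimod hΨid hS in
lemma msub_mul_list {j : J} (l : List (I × A))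
    (hl : ∀ p ∈ l, f p.1 = j ∧ p.2 ∈ S p.1 ∧ Ψ p.2 = 0) :
    ∀ x ∈ Msub Ψ S f ι D j, x * (l.map Prod.snd).prod ∈ Msub Ψ S f ι D j := by
  induction l with
  | nil => intro x hx; simpa using hx
  | cons p t ih =>
    intro x hx
    rw [List.map_cons, List.prod_cons, ← mul_assoc]
    have hp0 := hl p (List.mem_cons_self)
    exact ih (fun q hq => hl q (List.mem_cons_of_mem _ hq)) _
      (msub_mul_letter hΨD hΨbimod hΨid hS hp0.1 hp0.2.1 hp0.2.2 hx)

include hΨD hΨbimod hΨid hS in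
lemma msub_mul {j : J} {x y : A} (hx : x ∈ Msub Ψ S f ι D j) (hy : y ∈ Msub Ψ S f ι D j) :
    x * y ∈ Msub Ψ S f ι D j := by
  induction hy using Submodule.span_induction with
  | mem y hy =>
    rcases hy with ⟨d, hd, rfl⟩ | ⟨l, hne, hch, hp, rfl⟩
    · exact msub_mul_iota hΨbimod hS hd hx
    · exact msub_mul_list hΨD hΨbimod hΨid hS l hp x hx
  | zero => rw [mul_zero]; exact Submodule.zero_mem _
  | add y z _ _ hy hz => rw [mul_add]; exact Submodule.add_mem _ hy hz
  | smul r y _ hy => rw [mul_smul_comm]; exact Submodule.smul_mem _ _ hy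

include hΨD hΨid hS in
lemma s_sub_msub {j : J} {i : I} (hfi : f i = j) {c : A} (hc : c ∈ S i) :
    c ∈ Msub Ψ S f ι D j := by
  have : c = (c - ι (Ψ c)) + ι (Ψ c) := (sub_add_cancel c (ι (Ψ c))).symm
  rw [this]
  refine Submodule.add_mem _ ?_ (Submodule.subset_span (Or.inl ⟨Ψ c, hΨD c, rfl⟩))
  refine Submodule.subset_span (Or.inr ⟨[(i, c - ι (Ψ c))], by simp, by simp, ?_, by simp⟩)
  rintro p hp; simp only [List.mem_singleton] at hp; subst hp
  exact ⟨hfi, sub_mem hc (hS i _), by rw [map_sub, hΨid _ (hΨD c), sub_self]⟩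

include hΨD hΨbimod hΨid hS in
lemma adjoin_le_msub (j : J) {x : A}
    (hx : x ∈ StarAlgebra.adjoin ℂ (⋃ i ∈ f ⁻¹' {j}, (S i : Set A))) :
    x ∈ Msub Ψ S f ι D j := by
  set s : Set A := ⋃ i ∈ f ⁻¹' {j}, (S i : Set A) with hs
  have hstar : star s ⊆ s := by
    intro y hy
    rw [Set.mem_star] at hy
    rw [hs, Set.mem_iUnion₂] at hy ⊢
    obtain ⟨i, hi, hyi⟩ := hy
    exact ⟨i, hi, by simpa using star_mem (s := S i) hyi⟩
  have hx' : x ∈ Algebra.adjoin ℂ (s ∪ star s) := by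
    rw [← StarAlgebra.adjoin_toSubalgebra] at *
    exact hx
  have hx'' : x ∈ Algebra.adjoin ℂ s :=
    Algebra.adjoin_mono (Set.union_subset subset_rfl hstar) hx'
  have halg : Algebra.adjoin ℂ s ≤
      (Msub Ψ S f ι D j).toSubalgebra
        (Submodule.subset_span (Or.inl ⟨1, one_mem D, map_one ι⟩))
        (fun _ _ => msub_mul hΨD hΨbimod hΨid hS) := by
    apply Algebra.adjoin_le
    intro c hc
    rw [hs, Set.mem_iUnion₂] at hc
    obtain ⟨i, hi, hci⟩ := hc
    exact s_sub_msub hΨD hΨid hS hi hci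
  exact halg hx''


lemma psi_wset {Φ : A →ₗ[ℂ] B} (hfree : IsCFreeFamily Φ Ψ S) {j : J} {x : A}
    (hx : x ∈ Wset Ψ S f j) : Ψ x = 0 := by
  obtain ⟨l, hne, hch, hp, rfl⟩ := hx
  exact (listfree hfree l hne hch (fun p hp' => (hp p hp').2.1)
    (fun p hp' => (hp p hp').2.2)).1

lemma psi_span_wset {Φ : A →ₗ[ℂ] B} (hfree : IsCFreeFamily Φ Ψ S) {j : J} {x : A}
    (hx : x ∈ Submodule.span ℂ (Wset Ψ S f j)) : Ψ x = 0 := by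
  induction hx using Submodule.span_induction with
  | mem y hy => exact psi_wset hfree hy
  | zero => simp
  | add _ _ _ _ h1 h2 => rw [map_add, h1, h2, add_zero]
  | smul r _ _ h1 => rw [map_smul, h1, smul_zero]

include hΨid in
lemma centered_mem_span {Φ : A →ₗ[ℂ] B} (hfree : IsCFreeFamily Φ Ψ S) {j : J} {x : A}
    (hx : x ∈ Msub Ψ S f ι D j) (hc : Ψ x = 0) :
    x ∈ Submodule.span ℂ (Wset Ψ S f j) := by
  rw [Msub, Submodule.span_union] at hx
  obtain ⟨u, hu, v, hv, rfl⟩ := Submodule.mem_sup.mp hx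
  have himg : Submodule.span ℂ (⇑ι '' (D : Set B)) ≤
      Submodule.map ι.toAlgHom.toLinearMap (Subalgebra.toSubmodule D.toSubalgebra) := by
    rw [Submodule.span_le]
    rintro _ ⟨d, hd, rfl⟩
    exact ⟨d, hd, rfl⟩
  obtain ⟨d, hd, rfl⟩ := himg hu
  have hΨu : Ψ (ι.toAlgHom.toLinearMap d) = d := hΨid d hd
  have hΨv : Ψ v = 0 := psi_span_wset hfree hv
  have hd0 : d = 0 := by
    have := hc
    rw [map_add, hΨu, hΨv, add_zero] at this
    exact this
  subst hd0
  simpa using hv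

lemma words_free {Φ : A →ₗ[ℂ] B} (hfree : IsCFreeFamily Φ Ψ S) (m : ℕ) (ε : Fin (m+1) → J)
    (hadj : ∀ i : Fin m, ε i.castSucc ≠ ε i.succ)
    (a : Fin (m+1) → A) (ha : ∀ k, a k ∈ Wset Ψ S f (ε k)) :
    Ψ (List.ofFn a).prod = 0 ∧
      Φ (List.ofFn a).prod = (List.ofFn fun k => Φ (a k)).prod := by
  choose l hne hch hp hprod using ha
  set L := (List.ofFn l).flatten with hL
  have hnotnil : [] ∉ List.ofFn l := by
    intro h
    rw [List.mem_ofFn] at h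
    obtain ⟨k, hk⟩ := h
    exact hne k hk
  have hLne : L ≠ [] := by
    rw [hL]
    intro h
    rw [List.flatten_eq_nil_iff] at h
    exact hne 0 (h (l 0) (by rw [List.mem_ofFn]; exact ⟨0, rfl⟩))
  have hchL : L.IsChain (fun p q => p.1 ≠ q.1) := by
    rw [hL, List.isChain_flatten hnotnil]
    constructor
    · intro l' hl'
      rw [List.mem_ofFn] at hl'
      obtain ⟨k, rfl⟩ := hl'
      exact hch k
    · rw [List.isChain_ofFn]
      intro i hi x hx y hy
      have hxm : x ∈ l ⟨i, by omega⟩ := List.mem_of_mem_getLast? hx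
      have hym : y ∈ l ⟨i + 1, hi⟩ := List.mem_of_mem_head? hy
      have h1 : f x.1 = ε ⟨i, by omega⟩ := (hp _ x hxm).1
      have h2 : f y.1 = ε ⟨i + 1, hi⟩ := (hp _ y hym).1
      intro hxy
      apply hadj ⟨i, by omega⟩
      show ε ⟨i, by omega⟩ = ε ⟨i + 1, by omega⟩
      rw [← h1, ← h2, hxy]
  have hmemL : ∀ p ∈ L, p.2 ∈ S p.1 := by
    intro p hpL
    rw [hL, List.mem_flatten] at hpL
    obtain ⟨l', hl', hpl'⟩ := hpL
    rw [List.mem_ofFn] at hl'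
    obtain ⟨k, rfl⟩ := hl'
    exact (hp k p hpl').2.1
  have hcentL : ∀ p ∈ L, Ψ p.2 = 0 := by
    intro p hpL
    rw [hL, List.mem_flatten] at hpL
    obtain ⟨l', hl', hpl'⟩ := hpL
    rw [List.mem_ofFn] at hl'
    obtain ⟨k, rfl⟩ := hl'
    exact (hp k p hpl').2.2
  have hprodL : (L.map Prod.snd).prod = (List.ofFn a).prod := by
    rw [hL, List.map_flatten, List.prod_flatten, List.map_map, List.map_ofFn]
    congr 1
    exact List.ofFn_injective.eq_iff.mpr (funext fun k => (hprod k).symm)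
  have hmapL : (L.map fun p => Φ p.2).prod = (List.ofFn fun k => Φ (a k)).prod := by
    rw [hL, List.map_flatten, List.prod_flatten, List.map_map, List.map_ofFn]
    congr 1
    refine List.ofFn_injective.eq_iff.mpr (funext fun k => ?_)
    have h2 := (listfree hfree (l k) (hne k) (hch k)
      (fun p hp' => (hp k p hp').2.1) (fun p hp' => (hp k p hp').2.2)).2
    show ((l k).map fun p => Φ p.2).prod = Φ (a k)
    rw [hprod k, h2]
  obtain ⟨hΨ0, hΦ⟩ := listfree hfree L hLne hchL hmemL hcentL
  rw [hprodL] at hΨ0 hΦ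
  rw [hmapL] at hΦ
  exact ⟨hΨ0, hΦ⟩


lemma span_words_free {Φ : A →ₗ[ℂ] B} (hfree : IsCFreeFamily Φ Ψ S) (m : ℕ)
    (ε : Fin (m+1) → J) (hadj : ∀ i : Fin m, ε i.castSucc ≠ ε i.succ)
    (a : Fin (m+1) → A) (ha : ∀ k, a k ∈ Submodule.span ℂ (Wset Ψ S f (ε k))) :
    Ψ (List.ofFn a).prod = 0 ∧
      Φ (List.ofFn a).prod = (List.ofFn fun k => Φ (a k)).prod := by
  suffices key : ∀ t : ℕ, ∀ a : Fin (m+1) → A,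
      (∀ k : Fin (m+1), t ≤ (k : ℕ) → a k ∈ Wset Ψ S f (ε k)) →
      (∀ k : Fin (m+1), (k : ℕ) < t → a k ∈ Submodule.span ℂ (Wset Ψ S f (ε k))) →
      Ψ (List.ofFn a).prod = 0 ∧
        Φ (List.ofFn a).prod = (List.ofFn fun k => Φ (a k)).prod by
    exact key (m+1) a (fun k hk => absurd k.isLt (by omega)) (fun k _ => ha k)
  intro t
  induction t with
  | zero =>
    intro a h0 _
    exact words_free hfree m ε hadj a (fun k => h0 k (Nat.zero_le _))
  | succ t ih =>
    intro a hup hlow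
    by_cases ht : t < m + 1
    · set kt : Fin (m+1) := ⟨t, ht⟩ with hkt
      have hktv : (kt : ℕ) = t := rfl
      have hmem : a kt ∈ Submodule.span ℂ (Wset Ψ S f (ε kt)) :=
        hlow kt (by simp [hkt])
      have main : ∀ x, x ∈ Submodule.span ℂ (Wset Ψ S f (ε kt)) →
          Ψ (List.ofFn (Function.update a kt x)).prod = 0 ∧
          Φ (List.ofFn (Function.update a kt x)).prod =
            (List.ofFn fun k => Φ (Function.update a kt x k)).prod := by
        intro x hx
        induction hx using Submodule.span_induction with
        | mem y hy =>
          apply ih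
          · intro k hk
            rcases eq_or_ne k kt with rfl | hne'
            · rwa [Function.update_self]
            · rw [Function.update_of_ne hne']
              have hkk : (k : ℕ) ≠ t := fun hh => hne' (Fin.ext (by rw [hh, hktv]))
              exact hup k (by omega)
          · intro k hk
            rw [Function.update_of_ne (Fin.ne_of_val_ne (by rw [hktv]; omega))]
            exact hlow k (by omega)
        | zero =>
          constructor
          · rw [prod_update]; simp
          · rw [prod_update, prod_map_update]; simp
        | add x y hx1 hy1 ihx ihy =>
          obtain ⟨ix1, ix2⟩ := ihx
          obtain ⟨iy1, iy2⟩ := ihy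
          rw [prod_update] at ix1 iy1
          rw [prod_update, prod_map_update] at ix2 iy2
          constructor
          · rw [prod_update]
            simp only [mul_add, add_mul, map_add, ix1, iy1, add_zero]
          · rw [prod_update, prod_map_update]
            simp only [mul_add, add_mul, map_add, ix2, iy2]
        | smul r x hx1 ihx =>
          obtain ⟨ix1, ix2⟩ := ihx
          rw [prod_update] at ix1
          rw [prod_update, prod_map_update] at ix2
          constructor
          · rw [prod_update]
            simp only [mul_smul_comm, smul_mul_assoc, map_smul, ix1, smul_zero]
          · rw [prod_update, prod_map_update]
            simp only [mul_smul_comm, smul_mul_assoc, map_smul, ix2]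
      have := main (a kt) hmem
      rwa [Function.update_eq_self] at this
    · exact ih a (fun k hk => absurd k.isLt (by omega)) (fun k _ => hlow k (by omega))

end Words

end CFreeAux

theorem stmt_2 {B A : Type*} {I J : Type*}
    [CStarAlgebra B] [PartialOrder B] [StarOrderedRing B]
    [Ring A] [Algebra ℂ A] [StarRing A] [StarModule ℂ A]
    -- `𝔅` sits inside `𝔄` as a unital *-subalgebra:
    (ι : B →⋆ₐ[ℂ] A) (hι : Function.Injective ι)
    -- `𝔇` is a C*-subalgebra of `𝔅`:
    (D : StarSubalgebra ℂ B) (hD : IsClosed (D : Set B))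
    -- `Φ : 𝔄 → 𝔅` is a conditional expectation:
    (Φ : A →ₗ[ℂ] B)
    (hΦbimod : ∀ (b b' : B) (a : A), Φ (ι b * a * ι b') = b * Φ a * b')
    (hΦid : ∀ b : B, Φ (ι b) = b)
    -- `Ψ : 𝔄 → 𝔇` is a conditional expectation:
    (Ψ : A →ₗ[ℂ] B) (hΨD : ∀ a : A, Ψ a ∈ D)
    (hΨbimod : ∀ d d' : B, d ∈ D → d' ∈ D → ∀ a : A, Ψ (ι d * a * ι d') = d * Ψ a * d')
    (hΨid : ∀ d : B, d ∈ D → Ψ (ι d) = d)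
    -- `(𝔄ᵢ)_{i ∈ I}`: *-subalgebras of `𝔄`, each containing `𝔅`:
    (S : I → StarSubalgebra ℂ A) (hS : ∀ (i : I) (b : B), ι b ∈ S i)
    -- c-free with respect to `(Φ, Ψ)`:
    (hfree : IsCFreeFamily Φ Ψ S)
    -- a partition of the index set, encoded by the fibers of `f : I → J`:
    (f : I → J) :
    IsCFreeFamily Φ Ψ
      (fun j : J => StarAlgebra.adjoin ℂ (⋃ i ∈ f ⁻¹' {j}, (S i : Set A))) := by
  intro m ε hadj a hmem hcent
  have hspan : ∀ k, a k ∈ Submodule.span ℂ (CFreeAux.Wset Ψ S f (ε k)) := by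
    intro k
    exact CFreeAux.centered_mem_span (ι := ι) (D := D) hΨid hfree
      (CFreeAux.adjoin_le_msub hΨD hΨbimod hΨid hS (ε k) (hmem k)) (hcent k)
  exact CFreeAux.span_words_free hfree m ε hadj a hspan
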